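/- arXiv:2601.20456 — 2 statements merged into one kernel-verified Lean document; each statement's English description precedes it below -/
import Mathlib

section
/- Exact right integral of the shifted Legendre scaling functions (Result 2): for all J ≥ 1, n ∈ {1, …, 2^{J−1}}, natural m, and t ∈ [0,1], the right integral ∫_t^1 φ_{n,m}^J(s) ds equals: √(1/2^{J−1}) if t ≤ (n−1)/2^{J−1} and m = 0; 0 if t ≤ (n−1)/2^{J−1} and m ≥ 1; √((2m+1)/2^{J−1}) ∑_{i=0}^{m} ( c_{i,m}/(i+1) ) ( 1 − (2^{J−1} t − n + 1)^{i+1} ) if (n−1)/2^{J−1} < t < n/2^{J−1}; and 0 if t ≥ n/2^{J−1}. -/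
open MeasureTheory

/-- The coefficients `c_{i,m}` of the shifted Legendre polynomials:
`c_{i,m} = (∏_{j=0}^{m−1} (1+i+j)) / (∏_{j=0, j≠i}^{m} (i−j))` (and `c_{0,0} = 1`). -/
noncomputable def legendreCoeff (m i : ℕ) : ℝ :=
  (∏ j ∈ Finset.range m, ((1 : ℝ) + i + j)) /
    (∏ j ∈ (Finset.range (m + 1)).erase i, ((i : ℝ) - j))

/-- The shifted Legendre polynomial `L_m(t) = ∑_{i=0}^{m} c_{i,m} t^i` on `[0,1]`. -/
noncomputable def shiftedLegendre (m : ℕ) (t : ℝ) : ℝ :=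
  ∑ i ∈ Finset.range (m + 1), legendreCoeff m i * t ^ i

/-- The shifted Legendre scaling function `φ_{n,m}^J` on `[0,1]`:
`φ_{n,m}^J(t) = 2^{(J−1)/2} √(2m+1) L_m(2^{J−1} t − n + 1)` on
`[(n−1)/2^{J−1}, n/2^{J−1})`, and `0` otherwise. -/
noncomputable def scalingFun (J n m : ℕ) (t : ℝ) : ℝ :=
  if ((n : ℝ) - 1) / 2 ^ (J - 1) ≤ t ∧ t < (n : ℝ) / 2 ^ (J - 1) then
    Real.sqrt (2 ^ (J - 1)) * Real.sqrt (2 * m + 1) *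
      shiftedLegendre m (2 ^ (J - 1) * t - n + 1)
  else 0

section Aux

open Finset Polynomial

lemma prod_sub_range (i : ℕ) : ∏ j ∈ Finset.range i, ((i : ℝ) - j) = i.factorial := by
  have h : ∏ j ∈ range i, (i - j) = i.factorial := by
    rw [← Finset.prod_range_reflect]
    rw [← Finset.prod_range_add_one_eq_factorial]
    apply Finset.prod_congr rfl
    intro j hj
    simp only [mem_range] at hj
    omega
  calc ∏ j ∈ range i, ((i : ℝ) - j) = ∏ j ∈ range i, ((i - j : ℕ) : ℝ) := by
        apply Finset.prod_congr rfl
        intro j hj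
        simp only [mem_range] at hj
        push_cast [Nat.cast_sub hj.le]
        ring
    _ = i.factorial := by rw [← Nat.cast_prod, h]

lemma prod_Ico_sub (i m : ℕ) (h : i ≤ m) :
    ∏ j ∈ Finset.Ico (i+1) (m+1), ((i : ℝ) - j) = (-1)^(m-i) * (m-i).factorial := by
  rw [Finset.prod_Ico_eq_prod_range]
  have hc : m + 1 - (i + 1) = m - i := by omega
  rw [hc]
  have : ∀ k ∈ range (m - i), ((i:ℝ) - ((i + 1 + k : ℕ):ℝ)) = (-1) * ((k:ℝ)+1) := by
    intro k hk; push_cast; ring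
  rw [Finset.prod_congr rfl this, Finset.prod_mul_distrib, Finset.prod_const]
  congr 1
  · simp
  · rw [← Finset.prod_range_add_one_eq_factorial (m-i)]
    push_cast
    rfl

lemma erase_decomp (m i : ℕ) (h : i ≤ m) :
    (Finset.range (m+1)).erase i = Finset.range i ∪ Finset.Ico (i+1) (m+1) := by
  ext j
  simp only [mem_erase, mem_range, mem_union, mem_Ico]
  omega

lemma prod_erase_eq (m i : ℕ) (h : i ≤ m) :
    ∏ j ∈ (Finset.range (m+1)).erase i, ((i : ℝ) - j)
      = (-1)^(m-i) * i.factorial * (m-i).factorial := by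
  rw [erase_decomp m i h, Finset.prod_union, prod_sub_range, prod_Ico_sub i m h]
  · ring
  · rw [Finset.disjoint_left]
    intro j hj hj'
    simp only [mem_range, mem_Ico] at *
    omega

lemma fwdDiff_poly_zero : ∀ (d : ℕ) (p : Polynomial ℝ), p.natDegree < d →
    (fwdDiff 1 : (ℝ → ℝ) → (ℝ → ℝ))^[d] (fun x => p.eval x) = fun _ => 0 := by
  intro d
  induction d with
  | zero => intro p hp; omega
  | succ d ih =>
    intro p hp
    rw [Function.iterate_succ_apply]
    rcases eq_or_ne p.natDegree 0 with h0 | h0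
    · have hc : p = C (p.coeff 0) := p.eq_C_of_natDegree_eq_zero h0
      have h1 : (fwdDiff (1:ℝ) fun x => p.eval x) = fun _ => 0 := by
        funext x
        rw [hc]
        simp [fwdDiff]
      rw [h1]
      clear ih hp h0 hc h1
      induction d with
      | zero => rfl
      | succ d ih =>
          rw [Function.iterate_succ_apply,
            show (fwdDiff (1:ℝ) fun _ => (0:ℝ)) = fun _ => 0 by funext x; simp [fwdDiff], ih]
    · have hXd : (X + C 1 : ℝ[X]).natDegree = 1 := Polynomial.natDegree_X_add_C 1
      have hXl : (X + C 1 : ℝ[X]).leadingCoeff = 1 := Polynomial.leadingCoeff_X_add_C 1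
      have hcompdeg : (p.comp (X + C 1)).natDegree = p.natDegree := by
        rw [Polynomial.natDegree_comp, hXd, mul_one]
      have hcomp_ne : p.comp (X + C 1) ≠ 0 := by
        intro hz
        rw [hz, Polynomial.natDegree_zero] at hcompdeg
        exact h0 hcompdeg.symm
      have hpne : p ≠ 0 := fun hz => h0 (by simp [hz])
      have hlc : (p.comp (X + C 1)).leadingCoeff = p.leadingCoeff := by
        rw [Polynomial.leadingCoeff_comp (by rw [hXd]; norm_num), hXl, one_pow, mul_one]
      have hdeg : (p.comp (X + C 1)).degree = p.degree := by
        rw [Polynomial.degree_eq_natDegree hcomp_ne, Polynomial.degree_eq_natDegree hpne,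
          hcompdeg]
      have hsub : (p.comp (X + C 1) - p).degree < p.degree :=
        hdeg ▸ Polynomial.degree_sub_lt hdeg hcomp_ne hlc
      have hqdeg : (p.comp (X + C 1) - p).natDegree < d := by
        rcases eq_or_ne (p.comp (X + C 1) - p) 0 with hz | hz
        · rw [hz, Polynomial.natDegree_zero]; omega
        · have h2 : (p.comp (X + C 1) - p).natDegree < p.natDegree :=
            Polynomial.natDegree_lt_natDegree hz hsub
          omega
      have hstep : (fwdDiff (1:ℝ) fun x => p.eval x)
          = fun x => (p.comp (X + C 1) - p).eval x := by
        funext x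
        simp [fwdDiff, add_comm]
      rw [hstep]
      exact ih _ hqdeg

lemma alt_sum_zero (m : ℕ) (hm : 1 ≤ m) :
    ∑ i ∈ Finset.range (m+1), (-1:ℝ)^(m-i) * (m.choose i) *
      ∏ j ∈ Finset.Ico 1 m, ((1:ℝ) + i + j) = 0 := by
  set p : Polynomial ℝ := ∏ j ∈ Finset.Ico 1 m, (X + C ((1:ℝ)+j)) with hp
  have hdeg : p.natDegree < m := by
    rw [hp, Polynomial.natDegree_prod]
    · simp only [Polynomial.natDegree_X_add_C]
      rw [Finset.sum_const, Nat.card_Ico, smul_eq_mul, mul_one]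
      omega
    · intro j _; exact Polynomial.X_add_C_ne_zero _
  have key := congrFun (fwdDiff_poly_zero m p hdeg) 0
  rw [fwdDiff_iter_eq_sum_shift] at key
  rw [← key]
  apply Finset.sum_congr rfl
  intro i hi
  rw [zsmul_eq_mul]
  push_cast
  congr 1
  rw [hp, Polynomial.eval_prod]
  apply Finset.prod_congr rfl
  intro j hj
  simp
  ring

lemma sum_legendreCoeff_div (m : ℕ) (hm : 1 ≤ m) :
    ∑ i ∈ Finset.range (m+1), legendreCoeff m i / ((i:ℝ)+1) = 0 := by
  have key : ∀ i ∈ Finset.range (m+1), legendreCoeff m i / ((i:ℝ)+1)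
      = (1 / m.factorial) * ((-1:ℝ)^(m-i) * (m.choose i) *
          ∏ j ∈ Finset.Ico 1 m, ((1:ℝ) + i + j)) := by
    intro i hi
    rw [Finset.mem_range] at hi
    have him : i ≤ m := by omega
    have hsign : ((-1:ℝ)^(m-i)) * ((-1:ℝ)^(m-i)) = 1 := by
      rw [← pow_add]; exact Even.neg_one_pow ⟨m - i, rfl⟩
    have hfact : (m.choose i : ℝ) * i.factorial * (m-i).factorial = m.factorial := by
      exact_mod_cast Nat.choose_mul_factorial_mul_factorial him
    have hN : ∏ j ∈ Finset.range m, ((1 : ℝ) + i + j)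
        = ((1:ℝ) + i) * ∏ j ∈ Finset.Ico 1 m, ((1:ℝ) + i + j) := by
      rw [Finset.range_eq_Ico, Finset.prod_eq_prod_Ico_succ_bot hm]
      norm_num
    rw [legendreCoeff, prod_erase_eq m i him, hN]
    have h1 : (i.factorial : ℝ) ≠ 0 := by positivity
    have h2 : ((m-i).factorial : ℝ) ≠ 0 := by positivity
    have h3 : ((i:ℝ)+1) ≠ 0 := by positivity
    have h4 : ((m.factorial : ℝ)) ≠ 0 := by positivity
    have h5 : ((-1:ℝ)^(m-i)) ≠ 0 := by
      intro h; rw [h] at hsign; simp at hsign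
    field_simp
    rw [sq, hsign, ← hfact]
    ring
  rw [Finset.sum_congr rfl key, ← Finset.mul_sum, alt_sum_zero m hm, mul_zero]

/-- The smooth part of the scaling function. -/
noncomputable def legG (J n m : ℕ) (x : ℝ) : ℝ :=
  Real.sqrt (2 ^ (J - 1)) * Real.sqrt (2 * m + 1) *
    shiftedLegendre m (2 ^ (J - 1) * x - n + 1)

lemma scalingFun_eq_indicator (J n m : ℕ) :
    scalingFun J n m
      = Set.indicator (Set.Ico (((n:ℝ)-1)/2^(J-1)) ((n:ℝ)/2^(J-1))) (legG J n m) := by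
  funext x
  by_cases h : ((n:ℝ)-1)/2^(J-1) ≤ x ∧ x < (n:ℝ)/2^(J-1)
  · rw [scalingFun, if_pos h, Set.indicator_of_mem (by simpa [Set.mem_Ico] using h), legG]
  · rw [scalingFun, if_neg h, Set.indicator_of_notMem (by simpa [Set.mem_Ico] using h)]

lemma legG_continuous (J n m : ℕ) : Continuous (legG J n m) := by
  unfold legG _root_.shiftedLegendre
  apply Continuous.mul continuous_const
  apply continuous_finset_sum
  intro i _
  exact continuous_const.mul
    ((((continuous_const.mul continuous_id).sub continuous_const).add continuous_const).pow i)

lemma scalingFun_intervalIntegrable (J n m : ℕ) (u v : ℝ) :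
    IntervalIntegrable (scalingFun J n m) volume u v := by
  rw [scalingFun_eq_indicator]
  have h : IntervalIntegrable (legG J n m) volume u v :=
    (legG_continuous J n m).intervalIntegrable u v
  rw [intervalIntegrable_iff] at h ⊢
  exact h.indicator measurableSet_Ico

lemma hasDeriv_F (J n m : ℕ) (x : ℝ) :
    HasDerivAt (fun y => Real.sqrt (2^(J-1)) * Real.sqrt (2*(m:ℝ)+1) *
        ∑ i ∈ Finset.range (m+1),
          legendreCoeff m i / (((i:ℝ)+1) * 2^(J-1)) * (2^(J-1)*y - (n:ℝ) + 1)^(i+1))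
      (legG J n m x) x := by
  have hc : (0:ℝ) < 2^(J-1) := by positivity
  have hinner : HasDerivAt (fun y : ℝ => 2^(J-1)*y - (n:ℝ) + 1) (2^(J-1)) x := by
    simpa using (((hasDerivAt_id x).const_mul ((2:ℝ)^(J-1))).sub_const (n:ℝ)).add_const 1
  have hterm : ∀ i ∈ Finset.range (m+1),
      HasDerivAt (fun y => legendreCoeff m i / (((i:ℝ)+1) * 2^(J-1))
          * (2^(J-1)*y - (n:ℝ) + 1)^(i+1))
        (legendreCoeff m i / (((i:ℝ)+1) * 2^(J-1))
          * (((i:ℝ)+1) * (2^(J-1)*x - (n:ℝ) + 1)^i * 2^(J-1))) x := by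
    intro i _
    have := (hinner.pow (i+1)).const_mul (legendreCoeff m i / (((i:ℝ)+1) * 2^(J-1)))
    simpa using this
  have hsum := (HasDerivAt.fun_sum hterm).const_mul (Real.sqrt (2^(J-1)) * Real.sqrt (2*(m:ℝ)+1))
  refine hsum.congr_deriv ?_
  rw [legG, _root_.shiftedLegendre]
  congr 1
  apply Finset.sum_congr rfl
  intro i _
  have h3 : ((i:ℝ)+1) ≠ 0 := by positivity
  have hcn : ((2:ℝ)^(J-1)) ≠ 0 := ne_of_gt hc
  generalize (2:ℝ)^(J-1) = c at hcn ⊢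
  field_simp

lemma integral_master (J n m : ℕ) (hn : 1 ≤ n) (hn2 : n ≤ 2^(J-1)) (x : ℝ)
    (hax : ((n:ℝ)-1)/2^(J-1) ≤ x) (hxb : x ≤ (n:ℝ)/2^(J-1)) :
    (∫ s in x..(1:ℝ), scalingFun J n m s) =
      Real.sqrt ((2*(m:ℝ)+1)/2^(J-1)) * ∑ i ∈ Finset.range (m+1),
        legendreCoeff m i / ((i:ℝ)+1) * (1 - (2^(J-1)*x - (n:ℝ) + 1)^(i+1)) := by
  have hc : (0:ℝ) < 2^(J-1) := by positivity
  have hcn : ((2:ℝ)^(J-1)) ≠ 0 := ne_of_gt hc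
  set a : ℝ := ((n:ℝ)-1)/2^(J-1) with ha
  set b : ℝ := (n:ℝ)/2^(J-1) with hb
  have hb1 : b ≤ 1 := by
    rw [hb, div_le_one hc]
    exact_mod_cast hn2
  have hsplit : (∫ s in x..b, scalingFun J n m s) + (∫ s in b..(1:ℝ), scalingFun J n m s)
      = ∫ s in x..(1:ℝ), scalingFun J n m s :=
    intervalIntegral.integral_add_adjacent_intervals
      (scalingFun_intervalIntegrable J n m x b) (scalingFun_intervalIntegrable J n m b 1)
  have hright : (∫ s in b..(1:ℝ), scalingFun J n m s) = 0 := by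
    rw [intervalIntegral.integral_congr (g := fun _ => 0), intervalIntegral.integral_const,
      smul_zero]
    intro s hs
    rw [Set.uIcc_of_le hb1, Set.mem_Icc] at hs
    rw [scalingFun, if_neg]
    rintro ⟨-, h2⟩
    exact absurd (lt_of_le_of_lt hs.1 h2) (lt_irrefl b)
  have hmid : (∫ s in x..b, scalingFun J n m s) = ∫ s in x..b, legG J n m s := by
    rw [scalingFun_eq_indicator, intervalIntegral.integral_of_le hxb,
      MeasureTheory.integral_indicator measurableSet_Ico,
      Measure.restrict_restrict measurableSet_Ico]
    have hset : Set.Ico a b ∩ Set.Ioc x b = Set.Ioo x b := by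
      ext s
      simp only [Set.mem_inter_iff, Set.mem_Ico, Set.mem_Ioc, Set.mem_Ioo]
      constructor
      · rintro ⟨⟨-, h2⟩, h3, -⟩; exact ⟨h3, h2⟩
      · rintro ⟨h1, h2⟩; exact ⟨⟨le_trans hax h1.le, h2⟩, h1, h2.le⟩
    rw [hset, ← integral_Ioc_eq_integral_Ioo, ← intervalIntegral.integral_of_le hxb]
  have hF := fun (u : ℝ) (_ : u ∈ Set.uIcc x b) => hasDeriv_F J n m u
  have hftc := intervalIntegral.integral_eq_sub_of_hasDerivAt hF
    ((legG_continuous J n m).intervalIntegrable x b)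
  rw [← hsplit, hright, add_zero, hmid, hftc]
  have hub : 2^(J-1)*b - (n:ℝ) + 1 = 1 := by
    rw [hb, mul_div_cancel₀ _ hcn]; ring
  rw [hub]
  have hK : Real.sqrt ((2*(m:ℝ)+1)/2^(J-1))
      = Real.sqrt (2^(J-1)) * Real.sqrt (2*(m:ℝ)+1) / 2^(J-1) := by
    rw [Real.sqrt_div (by positivity) (2^(J-1))]
    rw [mul_comm (Real.sqrt (2^(J-1))), mul_div_assoc, Real.sqrt_div_self']
    ring
  rw [hK, ← mul_sub, ← Finset.sum_sub_distrib, Finset.mul_sum,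
    show Real.sqrt (2^(J-1)) * Real.sqrt (2*(m:ℝ)+1) / 2^(J-1)
        * ∑ i ∈ Finset.range (m+1),
            legendreCoeff m i / ((i:ℝ)+1) * (1 - (2^(J-1)*x - (n:ℝ) + 1)^(i+1))
      = ∑ i ∈ Finset.range (m+1), Real.sqrt (2^(J-1)) * Real.sqrt (2*(m:ℝ)+1) / 2^(J-1)
          * (legendreCoeff m i / ((i:ℝ)+1) * (1 - (2^(J-1)*x - (n:ℝ) + 1)^(i+1)))
      from Finset.mul_sum _ _ _]
  apply Finset.sum_congr rfl
  intro i _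
  have h3 : ((i:ℝ)+1) ≠ 0 := by positivity
  have hcn' : ((2:ℝ)^(J-1)) ≠ 0 := hcn
  generalize (2:ℝ)^(J-1) = c at hcn' ⊢
  field_simp
  ring

end Aux

/-- **Exact right integral of the shifted Legendre scaling functions (Result 2)**:
for `J ≥ 1`, `n ∈ {1, …, 2^{J−1}}`, `m : ℕ` and `t ∈ [0,1]`, the integral
`∫ₜ¹ φ_{n,m}^J(s) ds` is given piecewise. -/
theorem scalingFun_right_integral (J : ℕ) (hJ : 1 ≤ J) (n : ℕ)
    (hn : 1 ≤ n) (hn2 : n ≤ 2 ^ (J - 1)) (m : ℕ) (t : ℝ) (ht : t ∈ Set.Icc (0:ℝ) 1) :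
    (t ≤ ((n : ℝ) - 1) / 2 ^ (J - 1) → m = 0 →
      (∫ s in t..(1:ℝ), scalingFun J n m s) = Real.sqrt (1 / 2 ^ (J - 1))) ∧
    (t ≤ ((n : ℝ) - 1) / 2 ^ (J - 1) → 1 ≤ m →
      (∫ s in t..(1:ℝ), scalingFun J n m s) = 0) ∧
    (((n : ℝ) - 1) / 2 ^ (J - 1) < t → t < (n : ℝ) / 2 ^ (J - 1) →
      (∫ s in t..(1:ℝ), scalingFun J n m s) =
        Real.sqrt ((2 * m + 1) / 2 ^ (J - 1)) *
          ∑ i ∈ Finset.range (m + 1),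
            legendreCoeff m i / (i + 1) *
              (1 - (2 ^ (J - 1) * t - n + 1) ^ (i + 1))) ∧
    ((n : ℝ) / 2 ^ (J - 1) ≤ t →
      (∫ s in t..(1:ℝ), scalingFun J n m s) = 0) := by
  have hc : (0:ℝ) < 2^(J-1) := by positivity
  have hcn : ((2:ℝ)^(J-1)) ≠ 0 := ne_of_gt hc
  set a : ℝ := ((n:ℝ)-1)/2^(J-1) with ha
  set b : ℝ := (n:ℝ)/2^(J-1) with hb
  have hab : a ≤ b := by
    rw [ha, hb]
    gcongr
    linarith
  -- the common "t ≤ a" computation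
  have hta_int : ∀ (hta : t ≤ a), (∫ s in t..(1:ℝ), scalingFun J n m s)
      = Real.sqrt ((2*(m:ℝ)+1)/2^(J-1)) *
          ∑ i ∈ Finset.range (m+1), legendreCoeff m i / ((i:ℝ)+1) := by
    intro hta
    have hsplit : (∫ s in t..a, scalingFun J n m s) + (∫ s in a..(1:ℝ), scalingFun J n m s)
        = ∫ s in t..(1:ℝ), scalingFun J n m s :=
      intervalIntegral.integral_add_adjacent_intervals
        (scalingFun_intervalIntegrable J n m t a) (scalingFun_intervalIntegrable J n m a 1)
    have hleft : (∫ s in t..a, scalingFun J n m s) = 0 := by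
      rw [scalingFun_eq_indicator, intervalIntegral.integral_of_le hta,
        MeasureTheory.integral_indicator measurableSet_Ico,
        Measure.restrict_restrict measurableSet_Ico]
      have hsub : Set.Ico a b ∩ Set.Ioc t a ⊆ {a} := by
        rintro s ⟨⟨h1, -⟩, -, h4⟩
        exact le_antisymm h4 h1
      have hnull : volume (Set.Ico a b ∩ Set.Ioc t a) = 0 :=
        measure_mono_null hsub Real.volume_singleton
      rw [Measure.restrict_eq_zero.mpr hnull, integral_zero_measure]
    have hmain := integral_master J n m hn hn2 a (le_refl a) hab
    have hu0 : 2^(J-1)*a - (n:ℝ) + 1 = 0 := by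
      rw [ha, mul_div_cancel₀ _ hcn]; ring
    rw [hu0] at hmain
    rw [← hsplit, hleft, zero_add, hmain]
    congr 1
    apply Finset.sum_congr rfl
    intro i _
    rw [zero_pow (Nat.succ_ne_zero i), sub_zero, mul_one]
  refine ⟨?_, ?_, ?_, ?_⟩
  · -- case 1 : t ≤ a, m = 0
    intro hta hm0
    subst hm0
    rw [hta_int hta]
    have : ∑ i ∈ Finset.range (0+1), legendreCoeff 0 i / ((i:ℝ)+1) = 1 := by
      rw [Finset.sum_range_one]
      norm_num [legendreCoeff]
    rw [this, mul_one]
    norm_num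
  · -- case 2 : t ≤ a, 1 ≤ m
    intro hta hm
    rw [hta_int hta, sum_legendreCoeff_div m hm, mul_zero]
  · -- case 3 : a < t < b
    intro h1 h2
    exact integral_master J n m hn hn2 t h1.le h2.le
  · -- case 4 : b ≤ t
    intro hbt
    rw [intervalIntegral.integral_congr (g := fun _ => 0), intervalIntegral.integral_const,
      smul_zero]
    intro s hs
    rw [Set.uIcc_of_le ht.2, Set.mem_Icc] at hs
    rw [scalingFun, if_neg]
    rintro ⟨-, h2⟩
    exact absurd (lt_of_le_of_lt (hbt.trans hs.1) h2) (lt_irrefl b)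
end

section
/- Exact left double integral of the shifted Legendre scaling functions (Result 3): for all J ≥ 1, n ∈ {1, …, 2^{J−1}}, natural m, and t ∈ [0,1], the iterated integral ∫_0^t ∫_0^s φ_{n,m}^J(r) dr ds equals: 0 if t ≤ (n−1)/2^{J−1}; √((2m+1)/(2^{J−1})³) ∑_{i=0}^{m} ( c_{i,m}/((i+1)(i+2)) ) (2^{J−1} t − n + 1)^{i+2} if (n−1)/2^{J−1} < t < n/2^{J−1}; √(1/2^{J−1}) · ( (2^{J−1} t − n + 1)/2^{J−1} − 1/2^{J} ) if t ≥ n/2^{J−1} and m = 0; and √((2m+1)/2^{J−1}) · ( −(1/2^{J−1}) ∑_{i=0}^{m} c_{i,m}/(i+2) ) if t ≥ n/2^{J−1} and m ≥ 1. -/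
open MeasureTheory

section aux
open Finset

-- ascending product
lemma prodA (m i : ℕ) : (∏ j ∈ Finset.range m, ((1 : ℝ) + i + j)) * (Nat.factorial i) = Nat.factorial (m + i) := by
  induction m with
  | zero => simp
  | succ m ih =>
      rw [Finset.prod_range_succ, mul_right_comm, ih]
      have : m + 1 + i = (m + i) + 1 := by ring
      rw [this, Nat.factorial_succ]
      push_cast
      ring

-- descending product up to N ≤ i
lemma prodB (i : ℕ) : ∀ N ≤ i, (∏ j ∈ Finset.range N, ((i : ℝ) - j)) * (Nat.factorial (i - N)) = Nat.factorial i := by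
  intro N
  induction N with
  | zero => simp
  | succ N ih =>
      intro hN
      have hN' : N ≤ i := Nat.le_of_succ_le hN
      have h1 : i - N = i - (N + 1) + 1 := by omega
      have h2 : ((i : ℝ) - N) = ((i - N : ℕ) : ℝ) := by
        have := Nat.cast_sub hN' (R := ℝ); linarith [this]
      rw [Finset.prod_range_succ, mul_right_comm, mul_assoc, h2, ← Nat.cast_mul]
      have h3 : (i - (N+1)).factorial * (i - N) = (i - N).factorial := by
        rw [h1, Nat.factorial_succ]; ring
      rw [h3]
      exact ih hN'

lemma prodC (m i : ℕ) (h : i ≤ m) :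
    (∏ j ∈ Finset.Ico (i+1) (m+1), ((i : ℝ) - j)) = (-1)^(m-i) * Nat.factorial (m - i) := by
  rw [Finset.prod_Ico_eq_prod_range]
  have h1 : m + 1 - (i + 1) = m - i := by omega
  rw [h1]
  induction (m - i) with
  | zero => simp
  | succ s ih =>
      rw [Finset.prod_range_succ, ih]
      rw [Nat.factorial_succ]
      push_cast
      ring


lemma legendreCoeff_eq (m i : ℕ) (h : i ≤ m) :
    legendreCoeff m i = (-1)^(m-i) * (Nat.choose (m+i) i) * (Nat.choose m i) := by
  have hnum : (∏ j ∈ Finset.range m, ((1 : ℝ) + i + j)) = Nat.factorial (m + i) / Nat.factorial i := by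
    rw [eq_div_iff (by positivity)]
    exact prodA m i
  have hsplit : (Finset.range (m + 1)).erase i = Finset.range i ∪ Finset.Ico (i+1) (m+1) := by
    ext j
    simp [Finset.mem_erase, Finset.mem_range, Finset.mem_Ico, Finset.mem_union]
    omega
  have hdisj : Disjoint (Finset.range i) (Finset.Ico (i+1) (m+1)) := by
    simp [Finset.disjoint_left, Finset.mem_range, Finset.mem_Ico]
    omega
  have hden : (∏ j ∈ (Finset.range (m + 1)).erase i, ((i : ℝ) - j)) =
      (Nat.factorial i) * ((-1)^(m-i) * Nat.factorial (m - i)) := by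
    rw [hsplit, Finset.prod_union hdisj, prodC m i h]
    congr 1
    have := prodB i i le_rfl
    simpa using this
  have h1 : (Nat.factorial i : ℝ) ≠ 0 := by positivity
  have h3 : (Nat.factorial (m-i) : ℝ) ≠ 0 := by positivity
  have h5 : ((-1:ℝ))^(m-i) * (-1)^(m-i) = 1 := by
    rw [← pow_add, ← two_mul, pow_mul]; norm_num
  have h4 : ((-1:ℝ))^(m-i) ≠ 0 := by
    intro hc; rw [hc, zero_mul] at h5; norm_num at h5
  have hA : ((m+i).choose i : ℝ) * Nat.factorial i * Nat.factorial m = Nat.factorial (m+i) := by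
    norm_cast
    have := Nat.choose_mul_factorial_mul_factorial (Nat.le_add_left i m)
    rwa [Nat.add_sub_cancel] at this
  have hB : (m.choose i : ℝ) * Nat.factorial i * Nat.factorial (m-i) = Nat.factorial m := by
    norm_cast
    exact Nat.choose_mul_factorial_mul_factorial h
  have hD : (Nat.factorial i : ℝ) * ((-1)^(m-i) * Nat.factorial (m-i)) ≠ 0 := by
    intro hc
    rcases mul_eq_zero.mp hc with h' | h'
    · exact h1 h'
    · rcases mul_eq_zero.mp h' with h'' | h''
      · exact h4 h''
      · exact h3 h''
  rw [legendreCoeff, hnum, hden, div_div, div_eq_iff (by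
    intro hc
    rcases mul_eq_zero.mp hc with h' | h'
    · exact h1 h'
    · exact hD h')]
  linear_combination
    (-(((m+i).choose i : ℝ) * (m.choose i) * (Nat.factorial i)^2 * (Nat.factorial (m-i)))) * h5
      - hA - ((((m+i).choose i : ℝ)) * (Nat.factorial i)) * hB

open fwdDiff in
lemma altsum (m : ℕ) :
    ∑ k ∈ Finset.range (m+2), ((-1:ℤ)^(m+1-k) * ((m+1).choose k)) * ((m-1+k).choose m) = 0 := by
  have hzero : (fwdDiff (1:ℕ))^[m+1] (fun x : ℕ => ((x.choose m : ℤ))) = fun _ => 0 := by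
    rw [Function.iterate_succ_apply']
    have : (fwdDiff (1:ℕ))^[m] (fun x : ℕ => ((x.choose m : ℤ))) = fun _ => 1 := by
      have := fwdDiff_iter_choose (0) m
      simpa using this
    rw [this]
    exact fwdDiff_const (1:ℕ) (1:ℤ)
  have h := fwdDiff_iter_eq_sum_shift (1:ℕ) (fun x : ℕ => ((x.choose m : ℤ))) (m+1) (m-1)
  rw [hzero] at h
  simp only [smul_eq_mul, zsmul_eq_mul, Int.cast_mul] at h
  rw [eq_comm] at h
  convert h using 2 with k hk
  simp [smul_eq_mul, mul_comm]

lemma key_sum (m : ℕ) (hm : 1 ≤ m) :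
    ∑ i ∈ Finset.range (m+1), legendreCoeff m i / (i + 1) = 0 := by
  have halt := altsum m
  -- reindex: sum over k ∈ range (m+2), k = i+1 plus k = 0 term (zero)
  rw [Finset.sum_range_succ'] at halt
  have h0 : ((-1:ℤ)^(m+1-0) * ((m+1).choose 0)) * ((m-1+0).choose m) = 0 := by
    have : (m-1).choose m = 0 := Nat.choose_eq_zero_of_lt (by omega)
    simp [this]
  rw [h0, add_zero] at halt
  -- cast to ℝ
  have haltR : ∑ i ∈ Finset.range (m+1),
      ((-1:ℝ)^(m-i) * ((m+1).choose (i+1)) * ((m+i).choose m)) = 0 := by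
    have := congrArg (fun z : ℤ => (z : ℝ)) halt
    push_cast at this
    rw [← this]
    apply Finset.sum_congr rfl
    intro i hi
    have h1 : m + 1 - (i+1) = m - i := by omega
    have h2 : m - 1 + (i+1) = m + i := by
      have := Finset.mem_range.mp hi; omega
    rw [h2]
  have key : ∀ i ∈ Finset.range (m+1), legendreCoeff m i / (i+1) =
      (1 / (m+1 : ℝ)) * ((-1:ℝ)^(m-i) * ((m+1).choose (i+1)) * ((m+i).choose m)) := by
    intro i hi
    have him : i ≤ m := by have := Finset.mem_range.mp hi; omega
    rw [legendreCoeff_eq m i him]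
    have hch : (m+i).choose m = (m+i).choose i := by
      have h' := Nat.choose_symm (Nat.le_add_left i m)
      rwa [Nat.add_sub_cancel] at h'
    rw [hch]
    have hrec : ((m:ℝ)+1) * (m.choose i) = ((m+1).choose (i+1)) * ((i:ℝ)+1) := by
      have := Nat.add_one_mul_choose_eq m i
      have := congrArg (fun z : ℕ => (z : ℝ)) this
      push_cast at this
      linarith [this]
    have hi1 : ((i:ℝ)+1) ≠ 0 := by positivity
    have hm1 : ((m:ℝ)+1) ≠ 0 := by positivity
    field_simp
    linear_combination (((m+i).choose i : ℝ)) * hrec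
  rw [Finset.sum_congr rfl key, ← Finset.mul_sum, haltR, mul_zero]

end aux

noncomputable def legP (m : ℕ) (x : ℝ) : ℝ :=
  ∑ i ∈ Finset.range (m+1), legendreCoeff m i * x^(i+1) / (i+1)

noncomputable def legQ (m : ℕ) (x : ℝ) : ℝ :=
  ∑ i ∈ Finset.range (m+1), legendreCoeff m i * x^(i+2) / ((i+1)*(i+2))

lemma shiftedLegendre_continuous (m : ℕ) : Continuous (shiftedLegendre m) := by
  unfold shiftedLegendre
  exact continuous_finset_sum _ fun i _ => continuous_const.mul (continuous_pow i)

lemma legP_continuous (m : ℕ) : Continuous (legP m) := by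
  unfold legP
  exact continuous_finset_sum _ fun i _ =>
    (continuous_const.mul (continuous_pow (i+1))).div_const _

lemma legP_hasDeriv (m : ℕ) (x : ℝ) : HasDerivAt (legP m) (shiftedLegendre m x) x := by
  unfold legP shiftedLegendre
  apply HasDerivAt.fun_sum
  intro i _
  have h1 : ((i:ℝ)+1) ≠ 0 := by positivity
  have := ((hasDerivAt_pow (i+1) x).const_mul (legendreCoeff m i)).div_const ((i:ℝ)+1)
  convert this using 1
  · rfl
  push_cast
  field_simp

lemma legQ_hasDeriv (m : ℕ) (x : ℝ) : HasDerivAt (legQ m) (legP m x) x := by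
  unfold legQ legP
  apply HasDerivAt.fun_sum
  intro i _
  have h1 : ((i:ℝ)+1) ≠ 0 := by positivity
  have h2 : ((i:ℝ)+2) ≠ 0 := by positivity
  have := ((hasDerivAt_pow (i+2) x).const_mul (legendreCoeff m i)).div_const (((i:ℝ)+1)*((i:ℝ)+2))
  convert this using 1
  · rfl
  push_cast
  field_simp

lemma legP_zero (m : ℕ) : legP m 0 = 0 := by
  unfold legP
  apply Finset.sum_eq_zero
  intro i _
  simp [pow_succ]

lemma legQ_zero (m : ℕ) : legQ m 0 = 0 := by
  unfold legQ
  apply Finset.sum_eq_zero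
  intro i _
  simp [pow_succ]

/-- **Exact left double integral of the shifted Legendre scaling functions (Result 3)**:
for `J ≥ 1`, `n ∈ {1, …, 2^{J−1}}`, `m : ℕ` and `t ∈ [0,1]`, the iterated integral
`∫₀ᵗ ∫₀ˢ φ_{n,m}^J(r) dr ds` is given piecewise. -/
theorem scalingFun_left_double_integral (J : ℕ) (hJ : 1 ≤ J) (n : ℕ)
    (hn : 1 ≤ n) (hn2 : n ≤ 2 ^ (J - 1)) (m : ℕ) (t : ℝ) (ht : t ∈ Set.Icc (0:ℝ) 1) :
    (t ≤ ((n : ℝ) - 1) / 2 ^ (J - 1) →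
      (∫ s in (0:ℝ)..t, ∫ r in (0:ℝ)..s, scalingFun J n m r) = 0) ∧
    (((n : ℝ) - 1) / 2 ^ (J - 1) < t → t < (n : ℝ) / 2 ^ (J - 1) →
      (∫ s in (0:ℝ)..t, ∫ r in (0:ℝ)..s, scalingFun J n m r) =
        Real.sqrt ((2 * m + 1) / (2 ^ (J - 1) : ℝ) ^ 3) *
          ∑ i ∈ Finset.range (m + 1),
            legendreCoeff m i / ((i + 1) * (i + 2)) *
              (2 ^ (J - 1) * t - n + 1) ^ (i + 2)) ∧
    ((n : ℝ) / 2 ^ (J - 1) ≤ t → m = 0 →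
      (∫ s in (0:ℝ)..t, ∫ r in (0:ℝ)..s, scalingFun J n m r) =
        Real.sqrt (1 / 2 ^ (J - 1)) *
          ((2 ^ (J - 1) * t - n + 1) / 2 ^ (J - 1) - 1 / 2 ^ J)) ∧
    ((n : ℝ) / 2 ^ (J - 1) ≤ t → 1 ≤ m →
      (∫ s in (0:ℝ)..t, ∫ r in (0:ℝ)..s, scalingFun J n m r) =
        Real.sqrt ((2 * m + 1) / 2 ^ (J - 1)) *
          (-(1 / 2 ^ (J - 1)) *
            ∑ i ∈ Finset.range (m + 1), legendreCoeff m i / (i + 2))) := by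
  obtain ⟨ht0, ht1⟩ := ht
  set K : ℝ := 2 ^ (J - 1) with hKdef
  have hK : 0 < K := by positivity
  have hKne : K ≠ 0 := ne_of_gt hK
  set a : ℝ := ((n:ℝ) - 1) / K with hadef
  set b : ℝ := (n:ℝ) / K with hbdef
  have hn1 : (1:ℝ) ≤ (n:ℝ) := by exact_mod_cast hn
  have h0a : 0 ≤ a := div_nonneg (by linarith) hK.le
  have hab : a < b := by
    rw [hadef, hbdef, div_lt_div_iff_of_pos_right hK]
    linarith
  have hb1 : b ≤ 1 := by
    rw [hbdef, div_le_one hK, hKdef]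
    calc (n:ℝ) ≤ ((2^(J-1) : ℕ) : ℝ) := by exact_mod_cast hn2
      _ = 2 ^ (J-1) := by push_cast; ring
  have hKa : K * a - (n:ℝ) + 1 = 0 := by
    rw [hadef, mul_div_cancel₀ _ hKne]; ring
  have hKb : K * b - (n:ℝ) + 1 = 1 := by
    rw [hbdef, mul_div_cancel₀ _ hKne]; ring
  set C : ℝ := Real.sqrt K * Real.sqrt (2 * m + 1) with hCdef
  set g : ℝ → ℝ := fun r => C * shiftedLegendre m (K * r - (n:ℝ) + 1) with hgdef
  have hφeq : scalingFun J n m = (Set.Ico a b).indicator g := by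
    funext r
    rw [Set.indicator_apply]
    simp only [Set.mem_Ico]
    rfl
  have hgc : Continuous g := by
    apply continuous_const.mul
    exact (shiftedLegendre_continuous m).comp (((continuous_const.mul continuous_id).sub continuous_const).add continuous_const : Continuous fun y : ℝ => K * y - (n:ℝ) + 1)
  have hφint : ∀ u v : ℝ, IntervalIntegrable (scalingFun J n m) volume u v := by
    intro u v
    rw [hφeq, intervalIntegrable_iff]
    exact (intervalIntegrable_iff.mp (hgc.intervalIntegrable u v)).indicator measurableSet_Ico
  have hne : ∀ c : ℝ, ∀ᵐ x : ℝ ∂volume, x ≠ c := by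
    intro c
    rw [MeasureTheory.ae_iff]
    have : {x : ℝ | ¬ x ≠ c} = {c} := by ext x; simp
    rw [this]
    exact measure_singleton c
  -- antiderivative lemmas
  have hPd : ∀ x : ℝ, HasDerivAt (fun y => C / K * legP m (K * y - (n:ℝ) + 1)) (g x) x := by
    intro x
    have hin : HasDerivAt (fun y : ℝ => K * y - (n:ℝ) + 1) K x := by
      simpa using (((hasDerivAt_id x).const_mul K).sub_const (n:ℝ)).add_const 1
    have := ((legP_hasDeriv m (K * x - (n:ℝ) + 1)).comp x hin).const_mul (C / K)
    convert this using 1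
    · rfl
    · rfl
    · rfl
    rw [hgdef]
    field_simp
  have hQd : ∀ x : ℝ, HasDerivAt (fun y => C / K ^ 2 * legQ m (K * y - (n:ℝ) + 1))
      (C / K * legP m (K * x - (n:ℝ) + 1)) x := by
    intro x
    have hin : HasDerivAt (fun y : ℝ => K * y - (n:ℝ) + 1) K x := by
      simpa using (((hasDerivAt_id x).const_mul K).sub_const (n:ℝ)).add_const 1
    have := ((legQ_hasDeriv m (K * x - (n:ℝ) + 1)).comp x hin).const_mul (C / K ^ 2)
    convert this using 1
    · rfl
    · rfl
    · rfl
    field_simp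
  set F : ℝ → ℝ := fun s => ∫ r in (0:ℝ)..s, scalingFun J n m r with hFdef
  -- inner integral values
  have hF1 : ∀ s : ℝ, 0 ≤ s → s ≤ a → F s = 0 := by
    intro s h0 hs
    have : ∫ r in (0:ℝ)..s, scalingFun J n m r = ∫ r in (0:ℝ)..s, (0:ℝ) := by
      apply intervalIntegral.integral_congr_ae
      filter_upwards [hne a] with x hxa hmem
      rw [Set.uIoc_of_le h0] at hmem
      rw [hφeq]
      apply Set.indicator_of_notMem
      intro hc
      exact hxa (le_antisymm (hmem.2.trans hs) hc.1)
    rw [hFdef]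
    simp only []
    rw [this, intervalIntegral.integral_zero]
  have hF2 : ∀ s : ℝ, a ≤ s → s ≤ b → F s = C / K * legP m (K * s - (n:ℝ) + 1) := by
    intro s has hsb
    have hsplit : F s = (∫ r in (0:ℝ)..a, scalingFun J n m r) +
        ∫ r in a..s, scalingFun J n m r :=
      (intervalIntegral.integral_add_adjacent_intervals (hφint 0 a) (hφint a s)).symm
    have h0 : (∫ r in (0:ℝ)..a, scalingFun J n m r) = 0 := hF1 a h0a le_rfl
    have h3 : (∫ r in a..s, scalingFun J n m r) = ∫ r in a..s, g r := by
      apply intervalIntegral.integral_congr_ae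
      filter_upwards [hne b] with x hxb hmem
      rw [Set.uIoc_of_le has] at hmem
      rw [hφeq]
      apply Set.indicator_of_mem
      exact ⟨hmem.1.le, lt_of_le_of_ne (hmem.2.trans hsb) hxb⟩
    have h4 : (∫ r in a..s, g r) =
        C / K * legP m (K * s - (n:ℝ) + 1) - C / K * legP m (K * a - (n:ℝ) + 1) := by
      apply intervalIntegral.integral_eq_sub_of_hasDerivAt
      · intro x _
        exact hPd x
      · exact hgc.intervalIntegrable a s
    rw [hsplit, h0, h3, h4, hKa, legP_zero, mul_zero, sub_zero, zero_add]
  have hF3 : ∀ s : ℝ, b ≤ s → F s = C / K * legP m 1 := by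
    intro s hbs
    have hsplit : F s = F b + ∫ r in b..s, scalingFun J n m r :=
      (intervalIntegral.integral_add_adjacent_intervals (hφint 0 b) (hφint b s)).symm
    have h0 : (∫ r in b..s, scalingFun J n m r) = ∫ r in b..s, (0:ℝ) := by
      apply intervalIntegral.integral_congr_ae
      apply Filter.Eventually.of_forall
      intro x hmem
      rw [Set.uIoc_of_le hbs] at hmem
      rw [hφeq]
      apply Set.indicator_of_notMem
      intro hc
      exact absurd hmem.1 (not_lt.mpr hc.2.le)
    rw [hsplit, h0, intervalIntegral.integral_zero, add_zero, hF2 b hab.le le_rfl, hKb]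
  have hFc : Continuous F := intervalIntegral.continuous_primitive hφint 0
  have hFint : ∀ u v : ℝ, IntervalIntegrable F volume u v := fun u v =>
    hFc.intervalIntegrable u v
  -- outer integral values
  have hG1 : ∀ t' : ℝ, 0 ≤ t' → t' ≤ a → (∫ s in (0:ℝ)..t', F s) = 0 := by
    intro t' h0 hta
    have : ∫ s in (0:ℝ)..t', F s = ∫ s in (0:ℝ)..t', (0:ℝ) := by
      apply intervalIntegral.integral_congr
      intro x hx
      rw [Set.uIcc_of_le h0] at hx
      exact hF1 x hx.1 (hx.2.trans hta)
    rw [this, intervalIntegral.integral_zero]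
  have hG2 : ∀ t' : ℝ, a ≤ t' → t' ≤ b →
      (∫ s in (0:ℝ)..t', F s) = C / K ^ 2 * legQ m (K * t' - (n:ℝ) + 1) := by
    intro t' hat htb
    have hsplit : (∫ s in (0:ℝ)..t', F s) = (∫ s in (0:ℝ)..a, F s) + ∫ s in a..t', F s :=
      (intervalIntegral.integral_add_adjacent_intervals (hFint 0 a) (hFint a t')).symm
    have h0 : (∫ s in (0:ℝ)..a, F s) = 0 := hG1 a h0a le_rfl
    have h3 : (∫ s in a..t', F s) = ∫ s in a..t', C / K * legP m (K * s - (n:ℝ) + 1) := by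
      apply intervalIntegral.integral_congr
      intro x hx
      rw [Set.uIcc_of_le hat] at hx
      exact hF2 x hx.1 (hx.2.trans htb)
    have h4 : (∫ s in a..t', C / K * legP m (K * s - (n:ℝ) + 1)) =
        C / K ^ 2 * legQ m (K * t' - (n:ℝ) + 1) - C / K ^ 2 * legQ m (K * a - (n:ℝ) + 1) := by
      apply intervalIntegral.integral_eq_sub_of_hasDerivAt
      · intro x _
        exact hQd x
      · apply Continuous.intervalIntegrable
        exact continuous_const.mul ((legP_continuous m).comp (((continuous_const.mul continuous_id).sub continuous_const).add continuous_const : Continuous fun y : ℝ => K * y - (n:ℝ) + 1))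
    rw [hsplit, h0, h3, h4, hKa, legQ_zero, mul_zero, sub_zero, zero_add]
  have hG3 : ∀ t' : ℝ, b ≤ t' →
      (∫ s in (0:ℝ)..t', F s) = C / K ^ 2 * legQ m 1 + (t' - b) * (C / K * legP m 1) := by
    intro t' hbt
    have hsplit : (∫ s in (0:ℝ)..t', F s) = (∫ s in (0:ℝ)..b, F s) + ∫ s in b..t', F s :=
      (intervalIntegral.integral_add_adjacent_intervals (hFint 0 b) (hFint b t')).symm
    have h0 : (∫ s in (0:ℝ)..b, F s) = C / K ^ 2 * legQ m 1 := by
      rw [hG2 b hab.le le_rfl, hKb]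
    have h3 : (∫ s in b..t', F s) = ∫ s in b..t', C / K * legP m 1 := by
      apply intervalIntegral.integral_congr
      intro x hx
      rw [Set.uIcc_of_le hbt] at hx
      exact hF3 x hx.1
    rw [hsplit, h0, h3, intervalIntegral.integral_const, smul_eq_mul]
  refine ⟨?_, ?_, ?_, ?_⟩
  · intro hta
    exact hG1 t ht0 hta
  · intro hat htb
    rw [hG2 t hat.le htb.le]
    have hconst : Real.sqrt ((2 * m + 1) / K ^ 3) = C / K ^ 2 := by
      have h1 : (2 * (m:ℝ) + 1) / K ^ 3 = (K * (2 * m + 1)) / (K ^ 2) ^ 2 := by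
        field_simp
      rw [h1, Real.sqrt_div (by positivity), Real.sqrt_mul hK.le,
        Real.sqrt_sq (by positivity), hCdef]
    rw [hconst]
    congr 1
    unfold legQ
    apply Finset.sum_congr rfl
    intro i _
    push_cast
    ring
  · intro hbt hm0
    subst hm0
    rw [hG3 t hbt]
    have hc00 : legendreCoeff 0 0 = 1 := by
      simp [legendreCoeff]
    have hP1 : legP 0 1 = 1 := by
      unfold legP
      simp [hc00]
    have hQ1 : legQ 0 1 = 1/2 := by
      unfold legQ
      simp [hc00]
    have hC0 : C = Real.sqrt K := by
      rw [hCdef]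
      norm_num
    have h2J : (2:ℝ) ^ J = 2 * K := by
      rw [hKdef, ← pow_succ']
      congr 1
      omega
    rw [hP1, hQ1, hC0, h2J]
    have hsq : Real.sqrt K * Real.sqrt K = K := Real.mul_self_sqrt hK.le
    have hsqrtdiv : Real.sqrt (1 / K) = Real.sqrt K / K := by
      rw [Real.sqrt_div (by norm_num), Real.sqrt_one, div_eq_div_iff (by positivity) hKne,
        one_mul, hsq]
    rw [hsqrtdiv, hbdef]
    have hs0 : Real.sqrt K ≠ 0 := by positivity
    field_simp
    ring
  · intro hbt hm1
    rw [hG3 t hbt]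
    have hP1 : legP m 1 = 0 := by
      unfold legP
      rw [← key_sum m hm1]
      apply Finset.sum_congr rfl
      intro i _
      push_cast
      ring
    have hQ1 : legQ m 1 = -∑ i ∈ Finset.range (m+1), legendreCoeff m i / (i + 2) := by
      have h5 : legQ m 1 + ∑ i ∈ Finset.range (m+1), legendreCoeff m i / (i + 2) =
          ∑ i ∈ Finset.range (m+1), legendreCoeff m i / (i + 1) := by
        unfold legQ
        rw [← Finset.sum_add_distrib]
        apply Finset.sum_congr rfl
        intro i _
        have h1 : ((i:ℝ)+1) ≠ 0 := by positivity
        have h2 : ((i:ℝ)+2) ≠ 0 := by positivity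
        push_cast
        field_simp
        ring
      rw [key_sum m hm1] at h5
      linarith
    rw [hP1, hQ1, mul_zero, mul_zero, add_zero]
    have hconst : Real.sqrt ((2 * m + 1) / K) = C / K := by
      have h1 : (2 * (m:ℝ) + 1) / K = (K * (2 * m + 1)) / K ^ 2 := by
        field_simp
      rw [h1, Real.sqrt_div (by positivity), Real.sqrt_mul hK.le,
        Real.sqrt_sq hK.le, hCdef]
    rw [hconst]
    ring
end
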